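/- Let ω be a uniformly elliptic nearest-neighbor environment on ℤ^d with ellipticity constant κ. Suppose that for every u > 0 there exists a continuous function G̃_u : ℝ^d → ℝ such that for every η ∈ ℝ^d and every sequence (y_N)_{N≥1} in ℤ^d with y_N/N → η, one has (1/N) · G_{u,ω}(N, 0, y_N) → G̃_u(η) as N → ∞. Define I : ℝ^d → (−∞, +∞] by I(x) := sup_{u>0} G̃_u(x). Then for every open set G ⊆ ℝ^d, liminf_{N→∞} (1/N) · log P_{0,ω}(X_N/N ∈ G) ≥ − inf_{x∈G} I(x), with the conventions log 0 = −∞ and inf over the empty set = +∞. -/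

import Mathlib

open Filter

/-- The set of the `2d` unit vectors of `ℤ^d`. -/
def unitVecs (d : ℕ) : Finset (Fin d → ℤ) :=
  (Finset.univ.image fun i : Fin d => fun j => if j = i then (1 : ℤ) else 0) ∪
  (Finset.univ.image fun i : Fin d => fun j => if j = i then (-1 : ℤ) else 0)

/-- Quenched `n`-step transition probabilities of the random walk in environment `ω`. -/
noncomputable def qtp (d : ℕ) (ω : (Fin d → ℤ) → (Fin d → ℤ) → ℝ) :
    ℕ → (Fin d → ℤ) → (Fin d → ℤ) → ℝ
  | 0, x, y => if x = y then 1 else 0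
  | n + 1, x, y => ∑ e ∈ unitVecs d, ω x e * qtp d ω n (x + e) y

/-- `G_{u,ω}(t,x,y) := - log sup_n { e^{-u |n - t|} p_n(x,y) }`. -/
noncomputable def Gfun (d : ℕ) (ω : (Fin d → ℤ) → (Fin d → ℤ) → ℝ)
    (u t : ℝ) (x y : Fin d → ℤ) : ℝ :=
  - Real.log (⨆ n : ℕ, Real.exp (-u * |(n : ℝ) - t|) * qtp d ω n x y)

/-- `P_{0,ω}(X_N/N ∈ A) := ∑_{z : z/N ∈ A} p_N(0,z)`. -/
noncomputable def probQ (d : ℕ) (ω : (Fin d → ℤ) → (Fin d → ℤ) → ℝ)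
    (N : ℕ) (A : Set (Fin d → ℝ)) : ℝ :=
  ∑' z : Fin d → ℤ, A.indicator (fun _ => qtp d ω N 0 z) (fun i => (z i : ℝ) / (N : ℝ))

/-- Extended-real logarithm, with the convention `log x = -∞` for `x ≤ 0`. -/
noncomputable def elog (x : ℝ) : EReal := if x ≤ 0 then ⊥ else ((Real.log x : ℝ) : EReal)

lemma qtp_zero (d ω x y) : qtp d ω 0 x y = if x = y then 1 else 0 := rfl
lemma qtp_succ (d ω n x y) : qtp d ω (n+1) x y = ∑ e ∈ unitVecs d, ω x e * qtp d ω n (x + e) y := rfl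

lemma mem_unitVecs_iff {d : ℕ} {e : Fin d → ℤ} :
    e ∈ unitVecs d ↔ ∃ i : Fin d, ∃ s : ℤ, (s = 1 ∨ s = -1) ∧ e = fun j => if j = i then s else 0 := by
  simp only [unitVecs, Finset.mem_union, Finset.mem_image, Finset.mem_univ, true_and]
  constructor
  · rintro (⟨i, rfl⟩ | ⟨i, rfl⟩)
    · exact ⟨i, 1, Or.inl rfl, rfl⟩
    · exact ⟨i, -1, Or.inr rfl, rfl⟩
  · rintro ⟨i, s, (rfl | rfl), rfl⟩
    · exact Or.inl ⟨i, rfl⟩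
    · exact Or.inr ⟨i, rfl⟩

lemma unit_mem_unitVecs {d : ℕ} (i : Fin d) (s : ℤ) (hs : s = 1 ∨ s = -1) :
    (fun j => if j = i then s else 0) ∈ unitVecs d :=
  mem_unitVecs_iff.2 ⟨i, s, hs, rfl⟩

lemma abs_unitVec_le {d : ℕ} {e : Fin d → ℤ} (he : e ∈ unitVecs d) (j : Fin d) : |e j| ≤ 1 := by
  obtain ⟨i, s, hs, rfl⟩ := mem_unitVecs_iff.1 he
  rcases hs with rfl | rfl <;> dsimp <;> split <;> simp

lemma sum_unitVec_zmod {d : ℕ} {e : Fin d → ℤ} (he : e ∈ unitVecs d) :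
    ∑ j, ((e j : ℤ) : ZMod 2) = 1 := by
  obtain ⟨i, s, hs, rfl⟩ := mem_unitVecs_iff.1 he
  rcases hs with rfl | rfl <;>
    simp [apply_ite (fun t : ℤ => (t : ZMod 2)), Finset.sum_ite_eq] <;> decide

section basics
variable {d : ℕ} {ω : (Fin d → ℤ) → (Fin d → ℤ) → ℝ} {κ : ℝ}
  (h0 : ∀ x, ∀ e ∈ unitVecs d, 0 ≤ ω x e)
  (hsum : ∀ x, ∑ e ∈ unitVecs d, ω x e = 1)
  (hell0 : ∀ x, ∀ e ∈ unitVecs d, κ ≤ ω x e)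
  (hκ0 : 0 < κ)

include h0 in
lemma qtp_nonneg (n : ℕ) (x y : Fin d → ℤ) : 0 ≤ qtp d ω n x y := by
  induction n generalizing x with
  | zero => rw [qtp_zero]; positivity
  | succ n ih =>
    rw [qtp_succ]
    exact Finset.sum_nonneg fun e he => mul_nonneg (h0 x e he) (ih _)

include h0 hsum in
lemma qtp_le_one (n : ℕ) (x y : Fin d → ℤ) : qtp d ω n x y ≤ 1 := by
  induction n generalizing x with
  | zero => rw [qtp_zero]; split <;> norm_num
  | succ n ih =>
    rw [qtp_succ, ← hsum x]
    refine Finset.sum_le_sum fun e he => ?_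
    calc ω x e * qtp d ω n (x + e) y ≤ ω x e * 1 :=
          mul_le_mul_of_nonneg_left (ih _) (h0 x e he)
    _ = ω x e := mul_one _

lemma qtp_eq_zero_of_far (n : ℕ) (x y : Fin d → ℤ) (i : Fin d) (h : (n : ℤ) < |y i - x i|) :
    qtp d ω n x y = 0 := by
  induction n generalizing x with
  | zero =>
    rw [qtp_zero, if_neg]
    rintro rfl; simp at h
  | succ n ih =>
    rw [qtp_succ]
    refine Finset.sum_eq_zero fun e he => ?_
    rw [ih (x + e), mul_zero]
    have h1 := abs_unitVec_le he i
    have hrw : y i - (x + e) i = y i - x i - e i := by simp [Pi.add_apply]; ring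
    have h2 : |y i - x i| - |e i| ≤ |y i - (x + e) i| := by
      rw [hrw]; exact abs_sub_abs_le_abs_sub _ _
    push_cast at h ⊢
    linarith

include h0 in
lemma qtp_parity (n : ℕ) (x y : Fin d → ℤ) (h : qtp d ω n x y ≠ 0) :
    (n : ZMod 2) = ∑ i, ((y i - x i : ℤ) : ZMod 2) := by
  induction n generalizing x with
  | zero =>
    rw [qtp_zero] at h
    have : x = y := by by_contra hc; rw [if_neg hc] at h; exact h rfl
    subst this; simp
  | succ n ih =>
    rw [qtp_succ] at h
    obtain ⟨e, he, hne⟩ := Finset.exists_ne_zero_of_sum_ne_zero h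
    have h2 : qtp d ω n (x + e) y ≠ 0 := fun hz => hne (by rw [hz, mul_zero])
    have h3 := ih (x + e) h2
    have h4 := sum_unitVec_zmod he
    have key : (n : ZMod 2) = (∑ i, ((y i - x i : ℤ) : ZMod 2)) - 1 := by
      rw [h3, ← h4, ← Finset.sum_sub_distrib]
      refine Finset.sum_congr rfl fun i _ => ?_
      have hrw : y i - (x + e) i = y i - x i - e i := by simp [Pi.add_apply]; ring
      rw [hrw]; push_cast; ring
    push_cast
    rw [key]; push_cast; ring

include h0 hell0 hκ0 in
lemma qtp_two_step (n : ℕ) (x y : Fin d → ℤ) (hd : 1 ≤ d) :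
    κ ^ 2 * qtp d ω n x y ≤ qtp d ω (n + 2) x y := by
  set i0 : Fin d := ⟨0, hd⟩
  set e1 : Fin d → ℤ := fun j => if j = i0 then 1 else 0 with he1
  set e2 : Fin d → ℤ := fun j => if j = i0 then -1 else 0 with he2
  have m1 : e1 ∈ unitVecs d := unit_mem_unitVecs i0 1 (Or.inl rfl)
  have m2 : e2 ∈ unitVecs d := unit_mem_unitVecs i0 (-1) (Or.inr rfl)
  have hx : x + e1 + e2 = x := by
    funext j; simp only [Pi.add_apply, he1, he2]; split <;> ring
  have step2 : κ * qtp d ω n x y ≤ qtp d ω (n + 1) (x + e1) y := by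
    rw [qtp_succ]
    calc κ * qtp d ω n x y ≤ ω (x + e1) e2 * qtp d ω n (x + e1 + e2) y := by
          rw [hx]
          exact mul_le_mul_of_nonneg_right (hell0 _ _ m2) (qtp_nonneg h0 n x y)
    _ ≤ _ := Finset.single_le_sum
          (fun e he => mul_nonneg (h0 _ e he) (qtp_nonneg h0 n _ y)) m2
  have step1 : κ * qtp d ω (n + 1) (x + e1) y ≤ qtp d ω (n + 2) x y := by
    rw [show n + 2 = (n + 1) + 1 from rfl, qtp_succ]
    calc κ * qtp d ω (n + 1) (x + e1) y ≤ ω x e1 * qtp d ω (n + 1) (x + e1) y :=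
          mul_le_mul_of_nonneg_right (hell0 _ _ m1) (qtp_nonneg h0 _ _ y)
    _ ≤ _ := Finset.single_le_sum
          (fun e he => mul_nonneg (h0 _ e he) (qtp_nonneg h0 _ _ y)) m1
  calc κ ^ 2 * qtp d ω n x y = κ * (κ * qtp d ω n x y) := by ring
  _ ≤ κ * qtp d ω (n + 1) (x + e1) y := mul_le_mul_of_nonneg_left step2 (le_of_lt hκ0)
  _ ≤ _ := step1

include h0 hell0 hκ0 in
lemma qtp_even_steps (m n : ℕ) (x y : Fin d → ℤ) (hd : 1 ≤ d) :
    κ ^ (2 * m) * qtp d ω n x y ≤ qtp d ω (n + 2 * m) x y := by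
  induction m with
  | zero => simp
  | succ m ih =>
    have h2 := qtp_two_step h0 hell0 hκ0 (n + 2 * m) x y hd
    have hκ2 : (0:ℝ) ≤ κ ^ 2 := by positivity
    calc κ ^ (2 * (m + 1)) * qtp d ω n x y = κ ^ 2 * (κ ^ (2 * m) * qtp d ω n x y) := by ring
    _ ≤ κ ^ 2 * qtp d ω (n + 2 * m) x y := mul_le_mul_of_nonneg_left ih hκ2
    _ ≤ qtp d ω (n + 2 * m + 2) x y := h2
    _ = qtp d ω (n + 2 * (m + 1)) x y := by ring_nf

include h0 hell0 hκ0 in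
lemma qtp_reach (x y : Fin d → ℤ) :
    κ ^ (∑ i, (y i - x i).natAbs) ≤ qtp d ω (∑ i, (y i - x i).natAbs) x y := by
  set m := ∑ i, (y i - x i).natAbs with hm
  clear_value m
  induction m generalizing x with
  | zero =>
    have : x = y := by
      funext i
      have : (y i - x i).natAbs = 0 :=
        Finset.sum_eq_zero_iff.1 hm.symm i (Finset.mem_univ i)
      omega
    rw [this, qtp_zero, if_pos rfl]; norm_num
  | succ m ih =>
    have hne : ∃ i, x i ≠ y i := by
      by_contra hc
      push_neg at hc
      have : ∑ i, (y i - x i).natAbs = 0 :=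
        Finset.sum_eq_zero fun i _ => by rw [hc i]; omega
      omega
    obtain ⟨i, hi⟩ := hne
    set s : ℤ := if x i < y i then 1 else -1 with hs
    set e : Fin d → ℤ := fun j => if j = i then s else 0 with he
    have me : e ∈ unitVecs d := by
      apply unit_mem_unitVecs
      rw [hs]; split <;> simp
    have hsum' : m = ∑ j, (y j - (x + e) j).natAbs := by
      have key : ∀ j, (y j - (x + e) j).natAbs
          = (y j - x j).natAbs - (if j = i then 1 else 0) := by
        intro j
        simp only [Pi.add_apply, he]
        by_cases hj : j = i
        · subst hj; rw [if_pos rfl, if_pos rfl, hs]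
          split <;> omega
        · rw [if_neg hj, if_neg hj]; omega
      rw [Finset.sum_congr rfl fun j _ => key j]
      have hile : 1 ≤ (y i - x i).natAbs := by omega
      rw [Finset.sum_tsub_distrib]
      · simp [Finset.sum_ite_eq']
        omega
      · intro j _
        by_cases hj : j = i
        · subst hj; simp; omega
        · simp [hj]
    have ihe := ih (x + e) hsum'
    rw [show m + 1 = m + 1 from rfl, qtp_succ]
    calc κ ^ (m + 1) = κ * κ ^ m := by ring
    _ ≤ ω x e * qtp d ω m (x + e) y :=
        mul_le_mul (hell0 _ _ me) ihe (by positivity) ((hκ0.le).trans (hell0 _ _ me))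
    _ ≤ _ := Finset.single_le_sum
        (fun e' he' => mul_nonneg (h0 _ e' he') (qtp_nonneg h0 _ _ y)) me

include h0 hsum in
lemma qtp_decompose (N k : ℕ) (y : Fin d → ℤ) :
    ∀ x, qtp d ω (N + k) x y ≤
      ∑ z ∈ Finset.Icc (fun i => y i - k) (fun i => y i + k), qtp d ω N x z := by
  induction N with
  | zero =>
    intro x
    rw [Nat.zero_add]
    have hrhs : ∑ z ∈ Finset.Icc (fun i => y i - (k:ℤ)) (fun i => y i + k), qtp d ω 0 x z
        = if x ∈ Finset.Icc (fun i => y i - (k:ℤ)) (fun i => y i + k) then 1 else 0 := by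
      simp only [qtp_zero]
      exact Finset.sum_ite_eq _ x (fun _ => 1)
    rw [hrhs]
    by_cases hx : x ∈ Finset.Icc (fun i => y i - (k:ℤ)) (fun i => y i + k)
    · rw [if_pos hx]; exact qtp_le_one h0 hsum k x y
    · rw [if_neg hx]
      rw [Finset.mem_Icc] at hx
      have hfar : ∃ i, (k:ℤ) < |y i - x i| := by
        by_cases hA : (fun i => y i - (k:ℤ)) ≤ x
        · have hB : ¬ x ≤ (fun i => y i + (k:ℤ)) := fun hB => hx ⟨hA, hB⟩
          rw [Pi.le_def] at hB; push_neg at hB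
          obtain ⟨i, hi⟩ := hB
          refine ⟨i, lt_of_lt_of_le (by omega) (neg_le_abs _)⟩
        · rw [Pi.le_def] at hA; push_neg at hA
          obtain ⟨i, hi⟩ := hA
          refine ⟨i, lt_of_lt_of_le (by omega) (le_abs_self _)⟩
      obtain ⟨i, hi⟩ := hfar
      rw [qtp_eq_zero_of_far k x y i hi]
  | succ N ih =>
    intro x
    rw [show N + 1 + k = (N + k) + 1 by omega, qtp_succ]
    calc ∑ e ∈ unitVecs d, ω x e * qtp d ω (N + k) (x + e) y
        ≤ ∑ e ∈ unitVecs d, ω x e *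
          ∑ z ∈ Finset.Icc (fun i => y i - (k:ℤ)) (fun i => y i + k), qtp d ω N (x + e) z :=
          Finset.sum_le_sum fun e he => mul_le_mul_of_nonneg_left (ih _) (h0 x e he)
    _ = ∑ e ∈ unitVecs d, ∑ z ∈ Finset.Icc (fun i => y i - (k:ℤ)) (fun i => y i + k),
          ω x e * qtp d ω N (x + e) z := by simp [Finset.mul_sum]
    _ = ∑ z ∈ Finset.Icc (fun i => y i - (k:ℤ)) (fun i => y i + k),
          ∑ e ∈ unitVecs d, ω x e * qtp d ω N (x + e) z := Finset.sum_comm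
    _ = _ := Finset.sum_congr rfl fun z _ => (qtp_succ d ω N x z).symm


include h0 in
lemma probQ_ge_sum (N : ℕ) (A : Set (Fin d → ℝ)) (T : Finset (Fin d → ℤ))
    (hT : ∀ z ∈ T, (fun i => (z i : ℝ) / (N : ℝ)) ∈ A) :
    ∑ z ∈ T, qtp d ω N 0 z ≤ probQ d ω N A := by
  set f : (Fin d → ℤ) → ℝ :=
    fun z => A.indicator (fun _ => qtp d ω N 0 z) (fun i => (z i : ℝ) / (N : ℝ)) with hf
  have hzero : ∀ z ∉ Finset.Icc (fun _ : Fin d => -(N:ℤ)) (fun _ => (N:ℤ)), f z = 0 := by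
    intro z hz
    have hfar : ∃ i, (N:ℤ) < |z i - (0 : Fin d → ℤ) i| := by
      rw [Finset.mem_Icc] at hz
      by_cases hA : (fun _ : Fin d => -(N:ℤ)) ≤ z
      · have hB : ¬ z ≤ (fun _ => (N:ℤ)) := fun hB => hz ⟨hA, hB⟩
        rw [Pi.le_def] at hB; push_neg at hB
        obtain ⟨i, hi⟩ := hB
        exact ⟨i, lt_of_lt_of_le (by simp at hi ⊢; omega) (le_abs_self _)⟩
      · rw [Pi.le_def] at hA; push_neg at hA
        obtain ⟨i, hi⟩ := hA
        exact ⟨i, lt_of_lt_of_le (by simp at hi ⊢; omega) (neg_le_abs _)⟩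
    obtain ⟨i, hi⟩ := hfar
    have : qtp d ω N 0 z = 0 := qtp_eq_zero_of_far N 0 z i hi
    simp [hf, Set.indicator, this]
  have hsummable : Summable f := summable_of_ne_finset_zero hzero
  have hnn : ∀ z, 0 ≤ f z :=
    fun z => Set.indicator_nonneg (fun _ _ => qtp_nonneg h0 N 0 z) _
  have h1 : ∑ z ∈ T, qtp d ω N 0 z = ∑ z ∈ T, f z := by
    refine Finset.sum_congr rfl fun z hz => ?_
    rw [hf]
    exact (Set.indicator_of_mem (hT z hz) (fun _ => qtp d ω N 0 z)).symm
  rw [h1]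
  exact hsummable.sum_le_tsum T (fun z _ => hnn z)

include h0 hsum hell0 hκ0 in
lemma key_estimate (hd : 1 ≤ d) (u c : ℝ) (hu0 : 0 < u) (hceq : c = -Real.log κ)
    (hc0 : 0 ≤ c)
    (N : ℕ) (hN0 : (0:ℝ) < N) (yN : Fin d → ℤ)
    (hpar : (N : ZMod 2) = ∑ i, ((yN i : ℤ) : ZMod 2))
    (M : ℝ) (hM0 : 0 ≤ M)
    (hGle : Gfun d ω u (N:ℝ) 0 yN ≤ M)
    (A : Set (Fin d → ℝ))
    (hyG : ∀ z : Fin d → ℤ,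
      dist (fun i => (z i:ℝ)/(N:ℝ)) (fun i => (yN i:ℝ)/(N:ℝ)) ≤ (M+1)/(u*(N:ℝ)) →
      (fun i => (z i:ℝ)/(N:ℝ)) ∈ A) :
    Real.exp (-(M+1)*(1+c/u)) ≤ probQ d ω N A := by
  set S := ⨆ n : ℕ, Real.exp (-u * |(n:ℝ) - (N:ℝ)|) * qtp d ω n 0 yN with hS
  have hterm : ∀ n : ℕ, Real.exp (-u * |(n:ℝ) - (N:ℝ)|) * qtp d ω n 0 yN ≤ 1 := by
    intro n
    apply mul_le_one₀ _ (qtp_nonneg h0 n 0 yN) (qtp_le_one h0 hsum n 0 yN)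
    rw [Real.exp_le_one_iff]
    have : 0 ≤ u * |(n:ℝ) - (N:ℝ)| := mul_nonneg hu0.le (abs_nonneg _)
    linarith
  have hbdd : BddAbove (Set.range fun n : ℕ =>
      Real.exp (-u * |(n:ℝ) - (N:ℝ)|) * qtp d ω n 0 yN) := by
    refine ⟨1, ?_⟩; rintro _ ⟨n, rfl⟩; exact hterm n
  have hGfunS : Gfun d ω u (N:ℝ) 0 yN = - Real.log S := by rw [hS]; rfl
  have hSpos : 0 < S := by
    set m := ∑ i, ((yN i - (0 : Fin d → ℤ) i).natAbs) with hm
    have hreach := qtp_reach h0 hell0 hκ0 (0 : Fin d → ℤ) yN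
    have hpos : 0 < Real.exp (-u * |(m:ℝ) - (N:ℝ)|) * qtp d ω m 0 yN :=
      mul_pos (Real.exp_pos _) (lt_of_lt_of_le (pow_pos hκ0 m) hreach)
    exact lt_of_lt_of_le hpos (le_ciSup hbdd m)
  have hSge : Real.exp (-M) ≤ S := by
    rw [hGfunS] at hGle
    calc Real.exp (-M) ≤ Real.exp (Real.log S) := Real.exp_le_exp.2 (by linarith)
    _ = S := Real.exp_log hSpos
  have hlt : Real.exp (-(M+1)) < S :=
    lt_of_lt_of_le (Real.exp_lt_exp.2 (by linarith)) hSge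
  obtain ⟨n, hn⟩ := (lt_ciSup_iff hbdd).1 hlt
  have he1 : Real.exp (-u * |(n:ℝ) - (N:ℝ)|) ≤ 1 := by
    rw [Real.exp_le_one_iff]
    have : 0 ≤ u * |(n:ℝ) - (N:ℝ)| := mul_nonneg hu0.le (abs_nonneg _)
    linarith
  have hqtp_ge : Real.exp (-(M+1)) ≤ qtp d ω n 0 yN := by
    have h6 : Real.exp (-u * |(n:ℝ) - (N:ℝ)|) * qtp d ω n 0 yN ≤ qtp d ω n 0 yN :=
      mul_le_of_le_one_left (qtp_nonneg h0 n 0 yN) he1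
    linarith [hn]
  have hexp_ge : Real.exp (-(M+1)) ≤ Real.exp (-u * |(n:ℝ) - (N:ℝ)|) := by
    have h6 : Real.exp (-u * |(n:ℝ) - (N:ℝ)|) * qtp d ω n 0 yN
        ≤ Real.exp (-u * |(n:ℝ) - (N:ℝ)|) :=
      mul_le_of_le_one_right (Real.exp_pos _).le (qtp_le_one h0 hsum n 0 yN)
    linarith [hn]
  have habs : |(n:ℝ) - (N:ℝ)| ≤ (M+1)/u := by
    have h5 := Real.exp_le_exp.1 hexp_ge
    rw [le_div_iff₀ hu0]
    have := mul_comm u |(n:ℝ) - (N:ℝ)|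
    linarith
  have hqpos : 0 < qtp d ω n 0 yN := lt_of_lt_of_le (Real.exp_pos _) hqtp_ge
  rcases le_or_gt n N with hnN | hnN
  · -- n ≤ N : boost to time N using parity
    have hpar1 := qtp_parity h0 n 0 yN (ne_of_gt hqpos)
    have hparN : ((N - n : ℕ) : ZMod 2) = 0 := by
      rw [Nat.cast_sub hnN]
      have hs : ∑ i, ((yN i - (0 : Fin d → ℤ) i : ℤ) : ZMod 2)
          = ∑ i, ((yN i : ℤ) : ZMod 2) := by
        refine Finset.sum_congr rfl fun i _ => ?_
        simp
      rw [hpar, ← hs, ← hpar1]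
      ring
    have hdvd : 2 ∣ (N - n) := (ZMod.natCast_eq_zero_iff _ 2).1 hparN
    obtain ⟨m2, hm2⟩ := hdvd
    have hsteps := qtp_even_steps h0 hell0 hκ0 m2 n 0 yN hd
    have hNn : n + 2 * m2 = N := by omega
    have h2m : ((2*m2 : ℕ) : ℝ) ≤ (M+1)/u := by
      have habs' : |(n:ℝ) - (N:ℝ)| = ((N - n : ℕ) : ℝ) := by
        rw [abs_sub_comm, Nat.cast_sub hnN, abs_of_nonneg]
        have : (n:ℝ) ≤ (N:ℝ) := by exact_mod_cast hnN
        linarith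
      rw [← hm2, ← habs']
      exact habs
    have hk : Real.exp (-(c * ((M+1)/u))) ≤ κ ^ (2*m2) := by
      have hκexp : κ = Real.exp (-c) := by rw [hceq, neg_neg, Real.exp_log hκ0]
      have hκeq : κ ^ (2*m2) = Real.exp (((2*m2:ℕ):ℝ) * (-c)) := by
        rw [hκexp, ← Real.exp_nat_mul]
      rw [hκeq]
      apply Real.exp_le_exp.2
      have h7 : ((2*m2:ℕ):ℝ) * c ≤ ((M+1)/u) * c :=
        mul_le_mul_of_nonneg_right h2m hc0
      nlinarith [h7]
    have hqN : Real.exp (-(M+1) * (1 + c/u)) ≤ qtp d ω N 0 yN := by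
      have hprod : Real.exp (-(M+1) * (1 + c/u))
          = Real.exp (-(c * ((M+1)/u))) * Real.exp (-(M+1)) := by
        rw [← Real.exp_add]
        congr 1
        field_simp
        ring
      rw [hprod]
      calc Real.exp (-(c * ((M+1)/u))) * Real.exp (-(M+1))
          ≤ κ ^ (2*m2) * qtp d ω n 0 yN :=
            mul_le_mul hk hqtp_ge (Real.exp_pos _).le (pow_nonneg hκ0.le _)
      _ ≤ qtp d ω (n + 2*m2) 0 yN := hsteps
      _ = qtp d ω N 0 yN := by rw [hNn]
    have hmem : (fun i => ((yN i : ℝ))/(N:ℝ)) ∈ A := by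
      apply hyG
      rw [dist_self]
      positivity
    have hPQ := probQ_ge_sum h0 N A {yN} (by
      intro z hz
      rw [Finset.mem_singleton] at hz
      subst hz
      exact hmem)
    rw [Finset.sum_singleton] at hPQ
    linarith
  · -- N < n : come back to time N by path decomposition
    set k := n - N with hkdef
    have hnk : n = N + k := by omega
    have hkle : (k:ℝ) ≤ (M+1)/u := by
      have habs' : |(n:ℝ) - (N:ℝ)| = (k:ℝ) := by
        rw [hkdef, Nat.cast_sub hnN.le, abs_of_nonneg]
        have : (N:ℝ) ≤ (n:ℝ) := by exact_mod_cast hnN.le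
        linarith
      rw [← habs']
      exact habs
    have hdec := qtp_decompose h0 hsum N k yN 0
    have hTsub : ∀ z ∈ Finset.Icc (fun i => yN i - (k:ℤ)) (fun i => yN i + k),
        (fun i => (z i : ℝ)/(N:ℝ)) ∈ A := by
      intro z hz
      apply hyG
      have hd1 : dist (fun i => (z i:ℝ)/(N:ℝ)) (fun i => (yN i:ℝ)/(N:ℝ)) ≤ (k:ℝ)/(N:ℝ) := by
        rw [dist_pi_le_iff (by positivity)]
        intro i
        rw [Real.dist_eq]
        rw [Finset.mem_Icc] at hz
        have hz1 : yN i - (k:ℤ) ≤ z i := hz.1 i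
        have hz2 : z i ≤ yN i + (k:ℤ) := hz.2 i
        have heq2 : (z i : ℝ)/(N:ℝ) - (yN i:ℝ)/(N:ℝ) = ((z i - yN i : ℤ):ℝ)/(N:ℝ) := by
          push_cast
          ring
        rw [heq2, abs_div, abs_of_pos hN0]
        have hnum : |((z i - yN i : ℤ):ℝ)| ≤ (k:ℝ) := by
          have h10 : |(z i - yN i : ℤ)| ≤ (k:ℤ) := by
            rw [abs_le]
            constructor <;> omega
          calc |((z i - yN i : ℤ):ℝ)| = ((|z i - yN i| : ℤ) : ℝ) := by rw [Int.cast_abs]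
          _ ≤ ((k:ℤ):ℝ) := by exact_mod_cast h10
          _ = (k:ℝ) := by push_cast; ring
        gcongr
      have hkN : (k:ℝ)/(N:ℝ) ≤ (M+1)/(u*(N:ℝ)) := by
        have hs1 : (k:ℝ)/(N:ℝ) ≤ ((M+1)/u)/(N:ℝ) := by gcongr
        have hs2 : ((M+1)/u)/(N:ℝ) = (M+1)/(u*(N:ℝ)) := by
          field_simp
        linarith
      linarith [hd1, hkN]
    have hPQ := probQ_ge_sum h0 N A _ hTsub
    have hchain : Real.exp (-(M+1)) ≤ probQ d ω N A := by
      calc Real.exp (-(M+1)) ≤ qtp d ω n 0 yN := hqtp_ge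
      _ = qtp d ω (N+k) 0 yN := by rw [hnk]
      _ ≤ ∑ z ∈ Finset.Icc (fun i => yN i - (k:ℤ)) (fun i => yN i + k),
            qtp d ω N 0 z := hdec
      _ ≤ probQ d ω N A := hPQ
    refine le_trans (Real.exp_le_exp.2 ?_) hchain
    have h8 : 0 ≤ (M+1) * (c/u) := mul_nonneg (by linarith) (div_nonneg hc0 hu0.le)
    nlinarith [h8]

lemma elog_step (N : ℕ) (P A ε I c u : ℝ) (hN1 : (1:ℝ) ≤ (N:ℝ))
    (hu0 : 0 < u) (hc0 : 0 ≤ c) (hε0 : 0 < ε) (hε1 : ε ≤ 1) (hA0 : 0 ≤ A) (hAI : A ≤ I)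
    (hNε : (N:ℝ)⁻¹ ≤ ε) (hcu : c/u ≤ ε) (hI0 : 0 ≤ I)
    (hP : Real.exp (-((N:ℝ)*(A+ε)+1)*(1+c/u)) ≤ P) :
    ((-(I+ε*(I+4)) : ℝ) : EReal) ≤ (((N:ℝ)⁻¹:ℝ) : EReal) * elog P := by
  have hN0 : (0:ℝ) < N := by linarith
  have hPpos : 0 < P := lt_of_lt_of_le (Real.exp_pos _) hP
  have helog : elog P = ((Real.log P : ℝ) : EReal) := by
    rw [elog, if_neg (not_le.2 hPpos)]
  rw [helog, ← EReal.coe_mul]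
  apply EReal.coe_le_coe_iff.2
  have hlogP : -((N:ℝ)*(A+ε)+1) * (1+c/u) ≤ Real.log P := by
    calc -((N:ℝ)*(A+ε)+1) * (1+c/u)
        = Real.log (Real.exp (-((N:ℝ)*(A+ε)+1) * (1+c/u))) := (Real.log_exp _).symm
    _ ≤ Real.log P := Real.log_le_log (Real.exp_pos _) hP
  have hstep : -((A+ε) + (N:ℝ)⁻¹) * (1+c/u) ≤ (N:ℝ)⁻¹ * Real.log P := by
    have h9 := mul_le_mul_of_nonneg_left hlogP (inv_nonneg.2 hN0.le)
    have hNne : (N:ℝ) ≠ 0 := ne_of_gt hN0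
    have e1 : (N:ℝ)⁻¹ * ((N:ℝ)*(A+ε)+1) = (A+ε)+(N:ℝ)⁻¹ := by
      rw [mul_add, ← mul_assoc, inv_mul_cancel₀ hNne, one_mul, mul_one]
    have hid : (N:ℝ)⁻¹ * (-((N:ℝ)*(A+ε)+1) * (1+c/u)) = -((A+ε) + (N:ℝ)⁻¹) * (1+c/u) := by
      calc (N:ℝ)⁻¹ * (-((N:ℝ)*(A+ε)+1) * (1+c/u))
          = -((N:ℝ)⁻¹ * ((N:ℝ)*(A+ε)+1)) * (1+c/u) := by ring
      _ = -((A+ε)+(N:ℝ)⁻¹) * (1+c/u) := by rw [e1]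
    linarith
  have hfinal : -(I + ε*(I+4)) ≤ -((A+ε) + (N:ℝ)⁻¹) * (1+c/u) := by
    have hf1 : (A+ε) + (N:ℝ)⁻¹ ≤ I + 2*ε := by linarith
    have hf2 : 1 + c/u ≤ 1 + ε := by linarith
    have hf3 : 0 ≤ (A+ε) + (N:ℝ)⁻¹ := by positivity
    have hf4 : ((A+ε) + (N:ℝ)⁻¹) * (1+c/u) ≤ (I + 2*ε) * (1+ε) :=
      mul_le_mul hf1 hf2 (by positivity) (by linarith)
    nlinarith [hε1, hε0, hI0]
  linarith


end basics

theorem stmt6 (d : ℕ) (hd : 1 ≤ d) (κ : ℝ) (hκ0 : 0 < κ) (hκ1 : κ ≤ 1 / (2 * d))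
    (ω : (Fin d → ℤ) → (Fin d → ℤ) → ℝ)
    (hell : ∀ x, ∀ e ∈ unitVecs d, κ ≤ ω x e)
    (hsum : ∀ x, ∑ e ∈ unitVecs d, ω x e = 1)
    (Gt : ℝ → (Fin d → ℝ) → ℝ)
    (hGt : ∀ u : ℝ, 0 < u → Continuous (Gt u) ∧
      ∀ (η : Fin d → ℝ) (y : ℕ → Fin d → ℤ),
        Tendsto (fun N : ℕ => fun i => (y N i : ℝ) / (N : ℝ)) atTop (nhds η) →
        Tendsto (fun N : ℕ => (N : ℝ)⁻¹ * Gfun d ω u (N : ℝ) 0 (y N)) atTop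
          (nhds (Gt u η)))
    (G : Set (Fin d → ℝ)) (hG : IsOpen G) :
    - ⨅ x ∈ G, ⨆ u : Set.Ioi (0 : ℝ), ((Gt u x : ℝ) : EReal)
      ≤ Filter.liminf
          (fun N : ℕ => (((N : ℝ)⁻¹ : ℝ) : EReal) * elog (probQ d ω N G)) atTop := by
  set L := Filter.liminf
      (fun N : ℕ => (((N : ℝ)⁻¹ : ℝ) : EReal) * elog (probQ d ω N G)) atTop with hL
  have h0' : ∀ x, ∀ e ∈ unitVecs d, 0 ≤ ω x e := fun x e he => hκ0.le.trans (hell x e he)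
  have hd0 : (1:ℝ) ≤ (d:ℝ) := by exact_mod_cast hd
  have hκlt1 : κ < 1 := by
    have : (1:ℝ)/(2*d) ≤ 1/2 := by
      apply div_le_div_of_nonneg_left one_pos.le (by norm_num) (by linarith)
    linarith
  set c := -Real.log κ with hc
  have hc0 : 0 < c := by
    rw [hc]; simp only [neg_pos]; exact Real.log_neg hκ0 hκlt1
  rw [EReal.neg_le]
  refine le_iInf₂ fun x hx => ?_
  rw [EReal.neg_le]
  set Isup := ⨆ u : Set.Ioi (0:ℝ), ((Gt u x : ℝ) : EReal) with hIsup
  by_cases htop : Isup = ⊤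
  · rw [htop]; simp
  have hne_bot : Isup ≠ ⊥ := by
    have h1 : ((Gt 1 x : ℝ) : EReal) ≤ Isup :=
      le_iSup (fun u : Set.Ioi (0:ℝ) => ((Gt (u:ℝ) x : ℝ) : EReal)) ⟨1, by norm_num⟩
    intro hb; rw [hb, le_bot_iff] at h1; exact (EReal.coe_ne_bot _) h1
  set I := Isup.toReal with hI
  have hIsup_eq : Isup = (I : EReal) := (EReal.coe_toReal htop hne_bot).symm
  have hle_I : ∀ u : ℝ, 0 < u → Gt u x ≤ I := by
    intro u hu
    have h1 : ((Gt u x : ℝ) : EReal) ≤ Isup :=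
      le_iSup (fun u : Set.Ioi (0:ℝ) => ((Gt (u:ℝ) x : ℝ) : EReal)) ⟨u, hu⟩
    rw [hIsup_eq] at h1; exact_mod_cast h1
  -- radius
  obtain ⟨ρ, hρ0, hball⟩ := Metric.isOpen_iff.1 hG x hx
  set r := ρ / 5 with hr
  have hr0 : 0 < r := by positivity
  have hball2 : Metric.closedBall x (2 * r) ⊆ G := by
    intro z hz
    apply hball
    rw [Metric.mem_closedBall] at hz
    rw [Metric.mem_ball]
    have : 2 * r < ρ := by rw [hr]; linarith
    linarith
  -- the lattice approximating sequence
  set i0 : Fin d := ⟨0, hd⟩ with hi0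
  set y' : ℕ → Fin d → ℤ := fun N i => ⌊(N:ℝ) * x i⌋ with hy'
  set δ : ℕ → ℤ :=
    fun N => if ((N : ZMod 2) = ∑ i, ((y' N i : ℤ) : ZMod 2)) then 0 else 1 with hδ
  set y : ℕ → Fin d → ℤ := fun N => Function.update (y' N) i0 (y' N i0 + δ N) with hy
  have hy_apply : ∀ N i, y N i = if i = i0 then y' N i0 + δ N else y' N i :=
    fun N i => Function.update_apply (y' N) i0 (y' N i0 + δ N) i
  have hparity : ∀ N : ℕ, (N : ZMod 2) = ∑ i, ((y N i : ℤ) : ZMod 2) := by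
    intro N
    have hsplit : ∑ i, ((y N i : ℤ) : ZMod 2)
        = (∑ i, ((y' N i : ℤ) : ZMod 2)) + ((δ N : ℤ) : ZMod 2) := by
      rw [← Finset.add_sum_erase _ _ (Finset.mem_univ i0),
          ← Finset.add_sum_erase _ (fun i => ((y' N i : ℤ) : ZMod 2)) (Finset.mem_univ i0)]
      have h1 : ∀ i ∈ Finset.univ.erase i0, ((y N i : ℤ) : ZMod 2) = ((y' N i : ℤ) : ZMod 2) := by
        intro i hi
        rw [hy_apply, if_neg (Finset.mem_erase.1 hi).1]
      rw [Finset.sum_congr rfl h1, hy_apply, if_pos rfl]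
      push_cast
      ring
    rw [hsplit]
    simp only [hδ]
    by_cases hcase : ((N : ZMod 2) = ∑ i, ((y' N i : ℤ) : ZMod 2))
    · rw [if_pos hcase]; push_cast; rw [← hcase]; ring
    · rw [if_neg hcase]
      have h2 : ∀ a b : ZMod 2, a ≠ b → a = b + 1 := by decide
      have := h2 _ _ hcase
      rw [this]; push_cast; ring
  have hyconv : Tendsto (fun N : ℕ => fun i => (y N i : ℝ) / (N : ℝ)) atTop (nhds x) := by
    rw [tendsto_pi_nhds]
    intro i
    have hbound : ∀ N : ℕ, 1 ≤ N → |(y N i : ℝ) / N - x i| ≤ 2 / N := by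
      intro N hN
      have hN0 : (0:ℝ) < N := by exact_mod_cast hN
      have hfl : |(y' N i : ℝ) - N * x i| ≤ 1 := by
        rw [hy']
        have h1 := Int.floor_le ((N:ℝ) * x i)
        have h2 := Int.lt_floor_add_one ((N:ℝ) * x i)
        rw [abs_le]; constructor <;> [linarith; linarith]
      have hflz : ∀ j, |(y' N j : ℝ) - N * x j| ≤ 1 := by
        intro j
        rw [hy']
        have h1 := Int.floor_le ((N:ℝ) * x j)
        have h2 := Int.lt_floor_add_one ((N:ℝ) * x j)
        rw [abs_le]; constructor <;> [linarith; linarith]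
      have hδ1 : |((δ N : ℤ) : ℝ)| ≤ 1 := by
        simp only [hδ]; split <;> norm_num
      have hyd : |(y N i : ℝ) - N * x i| ≤ 2 := by
        have hrepr : (y N i : ℝ) = (y' N i : ℝ) + (if i = i0 then ((δ N : ℤ) : ℝ) else 0) := by
          by_cases hii : i = i0
          · rw [hy_apply, if_pos hii, if_pos hii, hii]; push_cast; ring
          · rw [hy_apply, if_neg hii, if_neg hii]; push_cast; ring
        have hif : |(if i = i0 then ((δ N : ℤ) : ℝ) else 0)| ≤ 1 := by
          split
          · exact hδ1
          · simp
        calc |(y N i : ℝ) - N * x i|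
            = |((y' N i : ℝ) - N * x i) + (if i = i0 then ((δ N : ℤ) : ℝ) else 0)| := by
              rw [hrepr]; ring_nf
        _ ≤ |(y' N i : ℝ) - N * x i| + |(if i = i0 then ((δ N : ℤ) : ℝ) else 0)| := abs_add_le _ _
        _ ≤ 2 := by linarith
      have heq : |(y N i : ℝ) / N - x i| = |(y N i : ℝ) - N * x i| / N := by
        rw [← abs_of_pos hN0, ← abs_div]
        congr 1
        rw [abs_of_pos hN0, sub_div, mul_div_cancel_left₀ _ hN0.ne']
      rw [heq]
      gcongr
    have hz : Tendsto (fun N : ℕ => (y N i : ℝ) / N - x i) atTop (nhds 0) := by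
      apply squeeze_zero_norm' ?_ (tendsto_const_div_atTop_nhds_zero_nat 2)
      filter_upwards [eventually_ge_atTop 1] with N hN using hbound N hN
    have := hz.add_const (x i)
    simpa using this
  -- the key ε-bound
  have key : ∀ ε : ℝ, ε ∈ Set.Ioc (0:ℝ) 1 → ((-(I + ε * (I + 4)) : ℝ) : EReal) ≤ L := by
    rintro ε ⟨hε0, hε1⟩
    set u := max (max ((I+2)/r) (c/ε)) 1 with hu
    have hu1 : (1:ℝ) ≤ u := le_max_right _ _
    have hu0 : (0:ℝ) < u := lt_of_lt_of_le one_pos hu1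
    have hcu : c / u ≤ ε := by
      have h1 : c / ε ≤ u := le_trans (le_max_right _ _) (le_max_left _ _)
      rw [div_le_iff₀ hε0] at h1
      rw [div_le_iff₀ hu0]
      nlinarith
    have hIu : (I+2)/u ≤ r := by
      have h1 : (I+2)/r ≤ u := le_trans (le_max_left _ _) (le_max_left _ _)
      rw [div_le_iff₀ hr0] at h1
      rw [div_le_iff₀ hu0]
      nlinarith
    set A := Gt u x with hA
    have hconv := (hGt u hu0).2 x y hyconv
    have hGfun_nonneg : ∀ N : ℕ, 0 ≤ Gfun d ω u (N:ℝ) 0 (y N) := by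
      intro N
      rw [Gfun]
      simp only [neg_nonneg]
      apply Real.log_nonpos
      · exact Real.iSup_nonneg fun n =>
          mul_nonneg (Real.exp_pos _).le (qtp_nonneg h0' n 0 (y N))
      · apply ciSup_le
        intro n
        apply mul_le_one₀ _ (qtp_nonneg h0' n 0 (y N)) (qtp_le_one h0' hsum n 0 (y N))
        rw [Real.exp_le_one_iff]
        have : 0 ≤ u * |(n:ℝ) - (N:ℝ)| := mul_nonneg hu0.le (abs_nonneg _)
        linarith
    have hA0 : 0 ≤ A := by
      apply ge_of_tendsto hconv
      filter_upwards with N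
      exact mul_nonneg (inv_nonneg.2 (Nat.cast_nonneg N)) (hGfun_nonneg N)
    have hAI : A ≤ I := hle_I u hu0
    have hI0 : 0 ≤ I := hA0.trans hAI
    have hev1 : ∀ᶠ N : ℕ in atTop, (N:ℝ)⁻¹ * Gfun d ω u (N:ℝ) 0 (y N) < A + ε :=
      hconv.eventually_lt_const (by linarith)
    have hev2 : ∀ᶠ N : ℕ in atTop, dist (fun i => (y N i : ℝ)/(N:ℝ)) x ≤ r := by
      filter_upwards [hyconv.eventually (Metric.closedBall_mem_nhds x hr0)] with N hN
      exact Metric.mem_closedBall.1 hN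
    have hev3 : ∀ᶠ N : ℕ in atTop, (N:ℝ)⁻¹ ≤ ε :=
      tendsto_inv_atTop_nhds_zero_nat.eventually_le_const hε0
    have main : ∀ᶠ N : ℕ in atTop,
        ((-(I + ε*(I+4)) : ℝ) : EReal) ≤ (((N:ℝ)⁻¹ : ℝ) : EReal) * elog (probQ d ω N G) := by
      filter_upwards [hev1, hev2, hev3, eventually_ge_atTop 1] with N h1 h2 h3 h4
      have hN0 : (0:ℝ) < N := by exact_mod_cast h4
      have hN1 : (1:ℝ) ≤ (N:ℝ) := by exact_mod_cast h4
      have hGle : Gfun d ω u (N:ℝ) 0 (y N) ≤ (N:ℝ) * (A+ε) := by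
        have h1' : (N:ℝ)⁻¹ * Gfun d ω u (N:ℝ) 0 (y N) ≤ A + ε := h1.le
        calc Gfun d ω u (N:ℝ) 0 (y N)
            = (N:ℝ) * ((N:ℝ)⁻¹ * Gfun d ω u (N:ℝ) 0 (y N)) := by field_simp
        _ ≤ (N:ℝ) * (A + ε) := mul_le_mul_of_nonneg_left h1' hN0.le
      have hM0 : 0 ≤ (N:ℝ) * (A+ε) := mul_nonneg hN0.le (by linarith)
      have hyG : ∀ z : Fin d → ℤ,
          dist (fun i => (z i:ℝ)/(N:ℝ)) (fun i => (y N i:ℝ)/(N:ℝ))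
            ≤ ((N:ℝ) * (A+ε)+1)/(u*(N:ℝ)) →
          (fun i => (z i:ℝ)/(N:ℝ)) ∈ G := by
        intro z hz
        apply hball2
        rw [Metric.mem_closedBall]
        have hb1 : ((N:ℝ)*(A+ε)+1)/(u*(N:ℝ)) ≤ r := by
          have hNne : (N:ℝ) ≠ 0 := ne_of_gt hN0
          have e2 : ((N:ℝ)*(A+ε)+1)/(u*(N:ℝ)) = (A+ε)/u + 1/(u*(N:ℝ)) := by
            field_simp
          have e3 : 1/(u*(N:ℝ)) ≤ 1/u := by
            rw [div_le_div_iff₀ (by positivity) hu0]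
            nlinarith
          have e4 : (A+ε)/u ≤ (I+1)/u := by gcongr <;> linarith
          have e5 : (I+1)/u + 1/u = (I+2)/u := by ring
          linarith
        calc dist (fun i => (z i:ℝ)/(N:ℝ)) x
            ≤ dist (fun i => (z i:ℝ)/(N:ℝ)) (fun i => (y N i:ℝ)/(N:ℝ))
              + dist (fun i => (y N i:ℝ)/(N:ℝ)) x := dist_triangle _ _ _
        _ ≤ ((N:ℝ)*(A+ε)+1)/(u*(N:ℝ)) + r := add_le_add hz h2
        _ ≤ 2 * r := by linarith
      have hPge := key_estimate h0' hsum hell hκ0 hd u c hu0 hc hc0.le N hN0 (y N)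
        (hparity N) ((N:ℝ)*(A+ε)) hM0 hGle G hyG
      exact elog_step N (probQ d ω N G) A ε I c u hN1 hu0 hc0.le hε0 hε1 hA0 hAI h3 hcu hI0 hPge
    exact le_liminf_of_le (by isBoundedDefault) main
  -- pass to the limit ε → 0⁺
  rw [hIsup_eq]
  have htendsto : Tendsto (fun ε : ℝ => ((-(I + ε*(I+4)) : ℝ) : EReal))
      (nhdsWithin 0 (Set.Ioi 0)) (nhds ((-I : ℝ) : EReal)) := by
    have hreal : Tendsto (fun ε : ℝ => -(I + ε*(I+4))) (nhds 0) (nhds (-I)) := by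
      have hcont : Continuous fun ε : ℝ => -(I + ε*(I+4)) :=
        (continuous_const.add (continuous_id'.mul continuous_const)).neg
      have := hcont.tendsto 0
      simpa using this
    exact (continuous_coe_real_ereal.tendsto _).comp (hreal.mono_left nhdsWithin_le_nhds)
  have hev : ∀ᶠ ε in nhdsWithin (0:ℝ) (Set.Ioi 0),
      ((-(I + ε*(I+4)) : ℝ) : EReal) ≤ L := by
    filter_upwards [Ioc_mem_nhdsGT_of_mem (Set.left_mem_Ico.2 one_pos)] with ε hε
    exact key ε hε
  have hfin := le_of_tendsto htendsto hev
  calc -(I : EReal) = ((-I : ℝ) : EReal) := (EReal.coe_neg I).symm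
  _ ≤ L := hfin
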